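/- Let B_{n,k} = (1/(n+1))·binom(2n+2, n−k)·binom(n+k, n) denote the entries of Borel's triangle (so that B_{n,0} = C_{n+1}, the (n+1)-st Catalan number, and binom(a,b) = 0 for b < 0 or b > a). Then for all integers n ≥ 1 and 1 ≤ k ≤ n+2, the identity B_{n,0}·binom(n+2, k) − B_{n,k} = B_{n+1, k−1} holds in ℚ. -/

import Mathlib

/-- The binomial coefficient `binom a b : ℚ` for integer arguments, equal to `0`
when `b < 0` or `b > a`. -/
def binom (a b : ℤ) : ℚ :=
  if 0 ≤ b ∧ b ≤ a then (a.toNat.choose b.toNat : ℚ) else 0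

/-- The entries of Borel's triangle: `B_{n,k} = (1/(n+1))·binom(2n+2, n−k)·binom(n+k, n)`. -/
noncomputable def borelT (n k : ℕ) : ℚ :=
  (1 / ((n : ℚ) + 1)) * binom (2 * (n : ℤ) + 2) ((n : ℤ) - k) * binom ((n : ℤ) + k) n

set_option maxHeartbeats 1000000

/-- For `n ≥ 1` and `1 ≤ k ≤ n+2`, the Borel triangle identity
`B_{n,0}·binom(n+2, k) − B_{n,k} = B_{n+1,k−1}` holds in `ℚ`. -/
theorem borel_recursion (n k : ℕ) (hn : 1 ≤ n) (hk1 : 1 ≤ k) (hk2 : k ≤ n + 2) :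
    borelT n 0 * binom ((n : ℤ) + 2) (k : ℤ) - borelT n k = borelT (n + 1) (k - 1) := by
  obtain ⟨m, rfl⟩ : ∃ m, k = m + 1 := ⟨k - 1, by omega⟩
  rcases show (∃ j, n = m + 1 + j) ∨ (n = m) ∨ (∃ p, n = p + 1 ∧ m = p + 2) from by
      rcases Nat.lt_or_ge n (m + 1) with h | h
      · right
        rcases Nat.lt_or_ge n m with h' | h'
        · exact Or.inr ⟨n - 1, by omega, by omega⟩
        · exact Or.inl (by omega)
      · exact Or.inl ⟨n - (m + 1), by omega⟩ with (⟨j, rfl⟩ | rfl | ⟨p, rfl, rfl⟩)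
  · -- main case
    simp only [borelT, binom]
    split_ifs with h1 h2 h3 h4 h5 h6 h7 <;> try (exfalso; omega)
    have t1 : (2 * ((m + 1 + j : ℕ) : ℤ) + 2).toNat = 2*m+2*j+4 := by omega
    have t2 : (((m + 1 + j : ℕ) : ℤ) - ((0 : ℕ) : ℤ)).toNat = m+1+j := by omega
    have t3 : ((((m + 1 + j : ℕ) : ℤ)) + ((0 : ℕ) : ℤ)).toNat = m+1+j := by omega
    have t4 : (((m + 1 + j : ℕ) : ℤ)).toNat = m+1+j := by omega
    have t5 : (((m + 1 + j : ℕ) : ℤ) + 2).toNat = m+j+3 := by omega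
    have t6 : (((m + 1 : ℕ) : ℤ)).toNat = m+1 := by omega
    have t7 : (((m + 1 + j : ℕ) : ℤ) - ((m + 1 : ℕ) : ℤ)).toNat = j := by omega
    have t8 : (((m + 1 + j : ℕ) : ℤ) + ((m + 1 : ℕ) : ℤ)).toNat = 2*m+j+2 := by omega
    have t9 : (2 * ((m + 1 + j + 1 : ℕ) : ℤ) + 2).toNat = 2*m+2*j+6 := by omega
    have t10 : (((m + 1 + j + 1 : ℕ) : ℤ) - ((m + 1 - 1 : ℕ) : ℤ)).toNat = j+2 := by omega
    have t11 : (((m + 1 + j + 1 : ℕ) : ℤ) + ((m + 1 - 1 : ℕ) : ℤ)).toNat = 2*m+j+2 := by omega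
    have t12 : (((m + 1 + j + 1 : ℕ) : ℤ)).toNat = m+j+2 := by omega
    simp only [t1, t2, t3, t4, t5, t6, t7, t8, t9, t10, t11, t12, Nat.choose_self]
    rw [Nat.cast_choose ℚ (show (m+1+j) ≤ 2*m+2*j+4 by omega),
        Nat.cast_choose ℚ (show (m+1) ≤ m+j+3 by omega),
        Nat.cast_choose ℚ (show j ≤ 2*m+2*j+4 by omega),
        Nat.cast_choose ℚ (show (m+1+j) ≤ 2*m+j+2 by omega),
        Nat.cast_choose ℚ (show (j+2) ≤ 2*m+2*j+6 by omega),
        Nat.cast_choose ℚ (show (m+j+2) ≤ 2*m+j+2 by omega)]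
    clear h1 h2 h3 h4 h5 h6 h7 t1 t2 t3 t4 t5 t6 t7 t8 t9 t10 t11 t12
    simp only [show 2*m+2*j+4 - (m+1+j) = m+j+3 from by omega,
      show m+j+3 - (m+1) = j+2 from by omega,
      show 2*m+2*j+4 - j = 2*m+j+4 from by omega,
      show 2*m+j+2 - (m+1+j) = m+1 from by omega,
      show 2*m+2*j+6 - (j+2) = 2*m+j+4 from by omega,
      show 2*m+j+2 - (m+j+2) = m from by omega]
    have h1 : ((m+j+3).factorial : ℚ) = (m+j+3)*(m+j+2)*(m+1+j).factorial := by
      rw [show m+j+3 = (m+1+j)+1+1 from by ring, Nat.factorial_succ, Nat.factorial_succ]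
      push_cast; ring
    have h2 : ((j+2).factorial : ℚ) = (j+2)*(j+1)*j.factorial := by
      rw [Nat.factorial_succ, Nat.factorial_succ]; push_cast; ring
    have h3 : ((m+1).factorial : ℚ) = (m+1)*m.factorial := by
      rw [Nat.factorial_succ]; push_cast; ring
    have h4 : ((m+j+2).factorial : ℚ) = (m+j+2)*(m+1+j).factorial := by
      rw [show m+j+2 = (m+1+j)+1 from by ring, Nat.factorial_succ]; push_cast; ring
    have h5 : ((2*m+2*j+6).factorial : ℚ) = (2*m+2*j+6)*(2*m+2*j+5)*(2*m+2*j+4).factorial := by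
      rw [show 2*m+2*j+6 = (2*m+2*j+4)+1+1 from by ring, Nat.factorial_succ, Nat.factorial_succ]
      push_cast; ring
    have h6 : ((2*m+j+4).factorial : ℚ) = (2*m+j+4)*(2*m+j+3)*(2*m+j+2).factorial := by
      rw [show 2*m+j+4 = (2*m+j+2)+1+1 from by ring, Nat.factorial_succ, Nat.factorial_succ]
      push_cast; ring
    rw [h1, h2, h3, h4, h5, h6]
    have f1 : ((m+1+j).factorial : ℚ) ≠ 0 := by positivity
    have f2 : ((j).factorial : ℚ) ≠ 0 := by positivity
    have f3 : ((m).factorial : ℚ) ≠ 0 := by positivity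
    have f4 : ((2*m+2*j+4).factorial : ℚ) ≠ 0 := by positivity
    have f5 : ((2*m+j+4).factorial : ℚ) ≠ 0 := by positivity
    have f6 : ((2*m+j+2).factorial : ℚ) ≠ 0 := by positivity
    push_cast
    field_simp
    ring
  · -- k = n + 1
    simp only [borelT, binom]
    split_ifs <;> try (exfalso; omega)
    have t1 : (2 * ((n:ℕ) : ℤ) + 2).toNat = 2*n+2 := by omega
    have t2 : (((n:ℕ) : ℤ) - ((0:ℕ) : ℤ)).toNat = n := by omega
    have t3 : (((n:ℕ) : ℤ) + ((0:ℕ) : ℤ)).toNat = n := by omega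
    have t4 : (((n:ℕ) : ℤ)).toNat = n := by omega
    have t5 : (((n:ℕ) : ℤ) + 2).toNat = n+2 := by omega
    have t6 : (((n+1 : ℕ) : ℤ)).toNat = n+1 := by omega
    have t9 : (2 * ((n+1 : ℕ) : ℤ) + 2).toNat = 2*n+4 := by omega
    have t10 : (((n+1 : ℕ) : ℤ) - ((n+1-1 : ℕ) : ℤ)).toNat = 1 := by omega
    have t11 : (((n+1 : ℕ) : ℤ) + ((n+1-1 : ℕ) : ℤ)).toNat = 2*n+1 := by omega
    simp only [t1, t2, t3, t4, t5, t6, t9, t10, t11, Nat.choose_self]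
    rw [Nat.cast_choose ℚ (show n ≤ 2*n+2 by omega),
        Nat.cast_choose ℚ (show n+1 ≤ n+2 by omega),
        Nat.cast_choose ℚ (show 1 ≤ 2*n+4 by omega),
        Nat.cast_choose ℚ (show n+1 ≤ 2*n+1 by omega)]
    simp only [show 2*n+2 - n = n+2 from by omega,
      show n+2 - (n+1) = 1 from by omega,
      show 2*n+4 - 1 = 2*n+3 from by omega,
      show 2*n+1 - (n+1) = n from by omega, Nat.factorial_one]
    have h1 : ((n+2).factorial : ℚ) = (n+2)*(n+1)*n.factorial := by
      rw [Nat.factorial_succ, Nat.factorial_succ]; push_cast; ring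
    have h2 : ((n+1).factorial : ℚ) = (n+1)*n.factorial := by
      rw [Nat.factorial_succ]; push_cast; ring
    have h3 : ((2*n+2).factorial : ℚ) = (2*n+2)*(2*n+1).factorial := by
      rw [show 2*n+2 = (2*n+1)+1 from by ring, Nat.factorial_succ]; push_cast; ring
    have h4 : ((2*n+4).factorial : ℚ) = (2*n+4)*(2*n+3)*(2*n+2)*(2*n+1).factorial := by
      rw [show 2*n+4 = (2*n+1)+1+1+1 from by ring, Nat.factorial_succ, Nat.factorial_succ,
        Nat.factorial_succ]
      push_cast; ring
    have h5 : ((2*n+3).factorial : ℚ) = (2*n+3)*(2*n+2)*(2*n+1).factorial := by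
      rw [show 2*n+3 = (2*n+1)+1+1 from by ring, Nat.factorial_succ, Nat.factorial_succ]
      push_cast; ring
    rw [h1, h2, h3, h4, h5]
    have f1 : ((n).factorial : ℚ) ≠ 0 := by positivity
    have f2 : ((2*n+1).factorial : ℚ) ≠ 0 := by positivity
    push_cast
    field_simp
    ring
  · -- k = n + 2
    simp only [borelT, binom]
    split_ifs <;> try (exfalso; omega)
    have t1 : (2 * ((p+1:ℕ) : ℤ) + 2).toNat = 2*p+4 := by omega
    have t2 : (((p+1:ℕ) : ℤ) - ((0:ℕ) : ℤ)).toNat = p+1 := by omega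
    have t3 : (((p+1:ℕ) : ℤ) + ((0:ℕ) : ℤ)).toNat = p+1 := by omega
    have t4 : (((p+1:ℕ) : ℤ)).toNat = p+1 := by omega
    have t5 : (((p+1:ℕ) : ℤ) + 2).toNat = p+3 := by omega
    have t6 : (((p+2+1 : ℕ) : ℤ)).toNat = p+3 := by omega
    have t9 : (2 * ((p+1+1 : ℕ) : ℤ) + 2).toNat = 2*p+6 := by omega
    have t10 : (((p+1+1 : ℕ) : ℤ) - ((p+2+1-1 : ℕ) : ℤ)).toNat = 0 := by omega
    have t11 : (((p+1+1 : ℕ) : ℤ) + ((p+2+1-1 : ℕ) : ℤ)).toNat = 2*p+4 := by omega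
    have t12 : (((p+1+1 : ℕ) : ℤ)).toNat = p+2 := by omega
    simp only [t1, t2, t3, t4, t5, t6, t9, t10, t11, t12, Nat.choose_self,
      Nat.choose_zero_right]
    rw [Nat.cast_choose ℚ (show p+1 ≤ 2*p+4 by omega),
        Nat.cast_choose ℚ (show p+2 ≤ 2*p+4 by omega)]
    simp only [show 2*p+4 - (p+1) = p+3 from by omega,
      show 2*p+4 - (p+2) = p+2 from by omega]
    have h1 : ((p+3).factorial : ℚ) = (p+3)*(p+2)*(p+1).factorial := by
      rw [show p+3 = (p+1)+1+1 from by ring, Nat.factorial_succ, Nat.factorial_succ]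
      push_cast; ring
    have h2 : ((p+2).factorial : ℚ) = (p+2)*(p+1).factorial := by
      rw [show p+2 = (p+1)+1 from by ring, Nat.factorial_succ]; push_cast; ring
    rw [h1, h2]
    have f1 : (((p+1)).factorial : ℚ) ≠ 0 := by positivity
    have f2 : ((2*p+4).factorial : ℚ) ≠ 0 := by positivity
    push_cast
    field_simp
    ring
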